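/- Prefix-maximum in matroids: in the free-order secretary analysis, let U be a finite ground set with a matroid M, and let S ⊆ U be a uniformly random subset where each element is included independently with probability 1/2; let P = U \ S. Define the cost C(y, T) of an element y relative to a set T as the weight of the minimum-weight element in the minimal prefix (in decreasing weight order) of T that spans y (or 0 if T does not span y). Then for every element y of the max-weight basis of U: P[y ∈ P and C(y, S) > C(y, P \ {y})] = 1/4. -/

import Mathlib

open Classical in
/-- The cost `C(y, T)` of an element `y` relative to a set `T`: order `T` by
decreasing weight as `Z_1, Z_2, ...`, let `i(y)` be minimal with
`y ∈ span {Z_1, ..., Z_{i(y)}}`, and set `C(y,T) = w(Z_{i(y)})` (and `0` if `T` does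
not span `y`).  Equivalently, it is the largest weight `w z` of an element `z ∈ T`
such that the elements of `T` of weight at least `w z` span `y`. -/
noncomputable def sampleCost {α : Type*} [DecidableEq α] [Fintype α]
    (M : Matroid α) (w : α → NNReal) (y : α) (T : Finset α) : NNReal :=
  (T.filter (fun z => y ∈ M.closure {x | x ∈ T ∧ w z ≤ w x})).sup w

/-- Free-order secretary prefix-cost symmetry.  `M` is a matroid on the
whole finite ground set with distinct positive weights `w`, `y` is an element of the
max-weight basis `B` of the ground set, and `S` is a uniformly random subset (each
element independently with probability 1/2), with `P = univ \ S`.  Assuming no ties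
between the two costs ever occur, the probability that `y ∈ P` and
`C(y, S) > C(y, P \ {y})` is exactly 1/4. -/
theorem stmt16 {α : Type*} [DecidableEq α] [Fintype α]
    (M : Matroid α) (hE : M.E = Set.univ)
    (w : α → NNReal) (hw : Function.Injective w) (hw0 : ∀ z, 0 < w z)
    (B : Finset α) (hB : M.IsBase ↑B)
    (hmax : ∀ B' : Finset α, M.IsBase ↑B' → ∑ x ∈ B', w x ≤ ∑ x ∈ B, w x)
    (y : α) (hy : y ∈ B)
    (hnotie : ∀ S : Finset α, y ∉ S →
      sampleCost M w y S ≠ sampleCost M w y ((Finset.univ \ S).erase y)) :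
    ((((Finset.univ : Finset (Finset α)).filter (fun S => y ∉ S ∧
          sampleCost M w y ((Finset.univ \ S).erase y) < sampleCost M w y S)).card : ℝ)
        / 2 ^ (Fintype.card α)) = 1/4 := by
  classical
  set C : Finset α → NNReal := fun S => sampleCost M w y S with hC
  set f : Finset α → Finset α := fun S => (Finset.univ \ S).erase y with hf
  have hyf : ∀ S, y ∉ f S := fun S => Finset.notMem_erase _ _
  have hff : ∀ S : Finset α, y ∉ S → f (f S) = S := by
    intro S hyS
    ext a
    by_cases ha : a = y
    · subst ha; simp [hf, hyS]
    · simp [hf, ha]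
  set A := (Finset.univ : Finset (Finset α)).filter
      (fun S => y ∉ S ∧ C (f S) < C S) with hA
  set Bf := (Finset.univ : Finset (Finset α)).filter
      (fun S => y ∉ S ∧ C S < C (f S)) with hBf
  have hcard : A.card = Bf.card := by
    apply Finset.card_bij' (fun S _ => f S) (fun S _ => f S)
    · intro S hS
      simp only [hA, Finset.mem_filter] at hS
      simp only [hBf, Finset.mem_filter]
      exact ⟨Finset.mem_univ _, hyf S, by rw [hff S hS.2.1]; exact hS.2.2⟩
    · intro S hS
      simp only [hBf, Finset.mem_filter] at hS
      simp only [hA, Finset.mem_filter]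
      exact ⟨Finset.mem_univ _, hyf S, by rw [hff S hS.2.1]; exact hS.2.2⟩
    · intro S hS
      simp only [hA, Finset.mem_filter] at hS
      exact hff S hS.2.1
    · intro S hS
      simp only [hBf, Finset.mem_filter] at hS
      exact hff S hS.2.1
  have hunion : A ∪ Bf = (Finset.univ : Finset (Finset α)).filter (fun S => y ∉ S) := by
    ext S
    simp only [hA, hBf, Finset.mem_union, Finset.mem_filter, Finset.mem_univ, true_and]
    constructor
    · rintro (⟨h1, _⟩ | ⟨h1, _⟩) <;> exact h1
    · intro h1
      rcases lt_or_gt_of_ne (hnotie S h1) with h | h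
      · exact Or.inr ⟨h1, h⟩
      · exact Or.inl ⟨h1, h⟩
  have hdisj : Disjoint A Bf := by
    rw [Finset.disjoint_left]
    intro S hSA hSB
    simp only [hA, Finset.mem_filter] at hSA
    simp only [hBf, Finset.mem_filter] at hSB
    exact absurd hSB.2.2 (not_lt_of_gt hSA.2.2)
  have hhalf : ((Finset.univ : Finset (Finset α)).filter (fun S => y ∉ S)) =
      (Finset.univ.erase y).powerset := by
    ext S
    simp [Finset.subset_erase, Finset.subset_univ]
  have hn : 0 < Fintype.card α := Fintype.card_pos_iff.mpr ⟨y⟩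
  have hcount : A.card + Bf.card = 2 ^ (Fintype.card α - 1) := by
    rw [← Finset.card_union_of_disjoint hdisj, hunion, hhalf, Finset.card_powerset,
      Finset.card_erase_of_mem (Finset.mem_univ y), Finset.card_univ]
  have h2A : 2 * A.card = 2 ^ (Fintype.card α - 1) := by omega
  have h4A : 4 * A.card = 2 ^ Fintype.card α := by
    have : 2 ^ Fintype.card α = 2 * 2 ^ (Fintype.card α - 1) := by
      rw [← pow_succ']
      congr 1
      omega
    omega
  rw [div_eq_div_iff (by positivity) (by norm_num)]
  have := congrArg (fun n : ℕ => (n : ℝ)) h4A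
  push_cast at this
  linarith
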